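/- Let Δ be a 2-local derivation on 𝓑 with Δ(L_{0,0}) = Δ(L_{1,0}) = Δ(L_{−1,1}) = 0. Then for every p ∈ ℕ (p ≥ 1), Δ(L_{p,0} + L_{−2p,2p}) = 0. -/
import Mathlib

noncomputable section

abbrev B := (ℤ × ℕ) →₀ ℂ

/-- basis element `L α i` -/
def L (α : ℤ) (i : ℕ) : B := Finsupp.single (α, i) 1

/-- structure constant `(α-1)(j+1) - (β-1)(i+1)` -/
def coef (p q : ℤ × ℕ) : ℂ :=
  ((p.1 - 1) * ((q.2 : ℤ) + 1) - (q.1 - 1) * ((p.2 : ℤ) + 1) : ℤ)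

/-- the Block-type bracket, as a bilinear map -/
def br : B →ₗ[ℂ] B →ₗ[ℂ] B :=
  Finsupp.lsum ℂ fun p => LinearMap.toSpanSingleton ℂ _
    (Finsupp.lsum ℂ fun q => LinearMap.toSpanSingleton ℂ _
      (coef p q • L (p.1 + q.1) (p.2 + q.2)))

/-- the outer derivation `d`, with `d (L β j) = β • L β j` -/
def dmap : B →ₗ[ℂ] B :=
  Finsupp.lsum ℂ fun p => LinearMap.toSpanSingleton ℂ _ ((p.1 : ℂ) • L p.1 p.2)

def IsDer (D : B →ₗ[ℂ] B) : Prop := ∀ x y, D (br x y) = br (D x) y + br x (D y)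

def Is2Local (Δ : B → B) : Prop :=
  ∀ x y, ∃ D : B →ₗ[ℂ] B, IsDer D ∧ Δ x = D x ∧ Δ y = D y

lemma Lap (β : ℤ) (j : ℕ) (k : ℤ × ℕ) : L β j k = if k = (β, j) then 1 else 0 := by
  simp [L, Finsupp.single_apply, eq_comm]

lemma dmap_L (β : ℤ) (j : ℕ) : dmap (L β j) = (β : ℂ) • L β j := by
  simp [dmap, L, Finsupp.lsum_single, LinearMap.toSpanSingleton_apply]

lemma br_L (a : B) (β : ℤ) (j : ℕ) :
    br a (L β j) = a.sum fun p c => (c * coef p (β, j)) • L (p.1 + β) (p.2 + j) := by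
  rw [br, Finsupp.lsum_apply]
  rw [LinearMap.finsupp_sum_apply]
  refine Finsupp.sum_congr fun p hp => ?_
  simp [L, Finsupp.lsum_single, LinearMap.toSpanSingleton_apply, mul_smul, smul_comm]

lemma br_L_apply (a : B) (β : ℤ) (j : ℕ) (k : ℤ × ℕ) :
    (br a (L β j)) k =
      if j ≤ k.2 then a (k.1 - β, k.2 - j) * coef (k.1 - β, k.2 - j) (β, j) else 0 := by
  rw [br_L, Finsupp.sum_apply]
  split_ifs with h
  · rw [Finsupp.sum, Finset.sum_eq_single ((k.1 - β, k.2 - j) : ℤ × ℕ)]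
    · simp only [Finsupp.smul_apply, Lap, smul_eq_mul]
      rw [if_pos]
      · ring
      · ext <;> simp <;> omega
    · intro p hp hne
      simp only [Finsupp.smul_apply, Lap, smul_eq_mul]
      rw [if_neg]
      · ring
      · intro hk
        apply hne
        rw [hk]
        ext <;> simp <;> omega
    · intro h0
      rw [Finsupp.notMem_support_iff.mp h0]
      simp
  · apply Finset.sum_eq_zero
    intro p hp
    simp only [Finsupp.smul_apply, Lap, smul_eq_mul]
    rw [if_neg]
    · ring
    · intro hk
      rw [hk] at h
      simp at h

lemma DL_eval (a : B) (lam : ℂ) (β : ℤ) (j : ℕ) (k : ℤ × ℕ) :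
    (br a (L β j) + lam • dmap (L β j)) k =
      (if j ≤ k.2 then a (k.1 - β, k.2 - j) * coef (k.1 - β, k.2 - j) (β, j) else 0)
        + lam * (if k = (β, j) then (β : ℂ) else 0) := by
  rw [Finsupp.add_apply, br_L_apply, dmap_L]
  simp only [Finsupp.smul_apply, Lap, smul_eq_mul]
  split_ifs <;> ring

lemma constr {D : B →ₗ[ℂ] B} {a : B} {lam : ℂ}
    (hD : ∀ x, D x = br a x + lam • dmap x) {β : ℤ} {j : ℕ}
    (h : D (L β j) = 0) (m : ℤ) (i : ℕ) :
    a (m, i) * coef (m, i) (β, j)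
      + lam * (if ((m + β, i + j) : ℤ × ℕ) = (β, j) then (β : ℂ) else 0) = 0 := by
  have h' : (br a (L β j) + lam • dmap (L β j)) (m + β, i + j) = 0 := by
    rw [← hD, h]; rfl
  rw [DL_eval] at h'
  simpa using h'

lemma constrA {D : B →ₗ[ℂ] B} {a : B} {lam : ℂ}
    (hD : ∀ x, D x = br a x + lam • dmap x) (h : D (L (-1) 1) = 0) :
    lam = 0 ∧ ∀ (m : ℤ) (i : ℕ), ((m : ℂ) + (i : ℂ)) * a (m, i) = 0 := by
  have key := constr hD h
  have hlam : lam = 0 := by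
    have h0 := key 0 0
    norm_num [coef] at h0
    exact h0
  refine ⟨hlam, fun m i => ?_⟩
  have h1 := key m i
  have hc : coef (m, i) (-1, 1) = 2 * ((m : ℂ) + (i : ℂ)) := by
    simp only [coef]
    push_cast
    ring
  rw [hc, hlam, zero_mul, add_zero] at h1
  linear_combination h1 / 2

lemma constrB {D : B →ₗ[ℂ] B} {a : B} {lam : ℂ}
    (hD : ∀ x, D x = br a x + lam • dmap x) (h : D (L 1 0) = 0) :
    lam = a (0, 0) ∧
      ∀ (m : ℤ) (i : ℕ), ¬(m = 0 ∧ i = 0) → ((m : ℂ) - 1) * a (m, i) = 0 := by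
  have key := constr hD h
  have hc : ∀ (m : ℤ) (i : ℕ), coef (m, i) (1, 0) = (m : ℂ) - 1 := by
    intro m i
    simp only [coef]
    push_cast
    ring
  constructor
  · have h0 := key 0 0
    rw [hc] at h0
    norm_num at h0
    linear_combination h0
  · intro m i hmi
    have h1 := key m i
    rw [hc, if_neg (by simp only [Prod.mk.injEq]; push_cast; omega), mul_zero, add_zero] at h1
    linear_combination h1

lemma constrC {D : B →ₗ[ℂ] B} {a : B} {lam : ℂ}
    (hD : ∀ x, D x = br a x + lam • dmap x) (h : D (L 2 0) = 0) :
    lam = a (0, 0) ∧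
      ∀ (m : ℤ) (i : ℕ), ¬(m = 0 ∧ i = 0) → ((m : ℂ) - (i : ℂ) - 2) * a (m, i) = 0 := by
  have key := constr hD h
  have hc : ∀ (m : ℤ) (i : ℕ), coef (m, i) (2, 0) = (m : ℂ) - (i : ℂ) - 2 := by
    intro m i
    simp only [coef]
    push_cast
    ring
  constructor
  · have h0 := key 0 0
    rw [hc] at h0
    norm_num at h0
    linear_combination h0 / 2
  · intro m i hmi
    have h1 := key m i
    rw [hc, if_neg (by simp only [Prod.mk.injEq]; push_cast; omega), mul_zero, add_zero] at h1
    linear_combination h1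

lemma Dx_eval (a : B) (lam : ℂ) (p : ℕ) (k : ℤ × ℕ) :
    (br a (L (p : ℤ) 0 + L (-(2 * p : ℤ)) (2 * p))
        + lam • dmap (L (p : ℤ) 0 + L (-(2 * p : ℤ)) (2 * p))) k =
      a (k.1 - p, k.2) * coef (k.1 - p, k.2) ((p : ℤ), 0)
      + (if 2 * p ≤ k.2 then
          a (k.1 - -(2 * p : ℤ), k.2 - 2 * p) *
            coef (k.1 - -(2 * p : ℤ), k.2 - 2 * p) (-(2 * p : ℤ), 2 * p) else 0)
      + lam * ((if k = ((p : ℤ), 0) then (p : ℂ) else 0)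
          + (if k = (-(2 * p : ℤ), 2 * p) then ((-(2 * p : ℤ) : ℤ) : ℂ) else 0)) := by
  have e1 := DL_eval a lam (p : ℤ) 0 k
  have e2 := DL_eval a lam (-(2 * p : ℤ)) (2 * p) k
  have hsplit : (br a (L (p : ℤ) 0 + L (-(2 * p : ℤ)) (2 * p))
        + lam • dmap (L (p : ℤ) 0 + L (-(2 * p : ℤ)) (2 * p))) k
      = (br a (L (p : ℤ) 0) + lam • dmap (L (p : ℤ) 0)) k
        + (br a (L (-(2 * p : ℤ)) (2 * p)) + lam • dmap (L (-(2 * p : ℤ)) (2 * p))) k := by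
    simp only [map_add, smul_add, Finsupp.add_apply]
    ring
  rw [hsplit, e1, e2]
  simp only [Nat.zero_le, if_true, Nat.sub_zero]
  push_cast
  ring

theorem two_local_vanishes_on_special_sum (Δ : B → B) (hΔ : Is2Local Δ)
    (hDer : ∀ D : B →ₗ[ℂ] B, IsDer D →
      ∃ (a : B) (lam : ℂ), ∀ x : B, D x = br a x + lam • dmap x)
    (h0 : Δ (L 0 0) = 0) (h1 : Δ (L 1 0) = 0) (h2 : Δ (L (-1) 1) = 0) :
    ∀ p : ℕ, 1 ≤ p → Δ (L (p : ℤ) 0 + L (-(2 * p : ℤ)) (2 * p)) = 0 := by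
  -- Step 0 : Δ (L 2 0) = 0
  have hL20 : Δ (L 2 0) = 0 := by
    refine Finsupp.ext fun k => ?_
    simp only [Finsupp.coe_zero, Pi.zero_apply]
    by_cases hk : k.1 + (k.2 : ℤ) = 2
    · obtain ⟨D, hDder, hxD, hyD⟩ := hΔ (L 2 0) (L 1 0)
      obtain ⟨a, lam, hD⟩ := hDer D hDder
      obtain ⟨hlam, hB⟩ := constrB hD (by rw [← hyD, h1])
      rw [hxD, hD, DL_eval]
      simp only [Nat.zero_le, if_true, Nat.sub_zero]
      by_cases hk20 : k = ((2 : ℤ), (0 : ℕ))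
      · subst hk20
        have hc : coef ((2 : ℤ) - 2, (0 : ℕ)) (2, 0) = -2 := by norm_num [coef]
        rw [hc, if_pos rfl, hlam]
        norm_num
      · rw [if_neg hk20, mul_zero, add_zero]
        have hcond : ¬(k.1 - 2 = 0 ∧ k.2 = 0) := by
          intro ⟨hA', hB'⟩
          exact hk20 (by ext <;> simp <;> omega)
        have hz := hB (k.1 - 2) k.2 hcond
        have hne : ((k.1 : ℂ) - 2) - 1 ≠ 0 := by
          have : ((k.1 - 3 : ℤ) : ℂ) ≠ 0 := Int.cast_ne_zero.mpr (by omega)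
          intro hcontra
          apply this
          push_cast at hcontra ⊢
          linear_combination hcontra
        have : ((k.1 - 2 : ℤ) : ℂ) - 1 = ((k.1 : ℂ) - 2) - 1 := by push_cast; ring
        rw [this] at hz
        rcases mul_eq_zero.mp hz with hz' | hz'
        · exact absurd hz' hne
        · rw [hz', zero_mul]
    · obtain ⟨D, hDder, hxD, hyD⟩ := hΔ (L 2 0) (L (-1) 1)
      obtain ⟨a, lam, hD⟩ := hDer D hDder
      obtain ⟨hlam, hA⟩ := constrA hD (by rw [← hyD, h2])
      rw [hxD, hD, DL_eval]
      simp only [Nat.zero_le, if_true, Nat.sub_zero]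
      rw [hlam, zero_mul, add_zero]
      have hz := hA (k.1 - 2) k.2
      have hne : ((k.1 - 2 : ℤ) : ℂ) + (k.2 : ℂ) ≠ 0 := by
        have : ((k.1 - 2 + k.2 : ℤ) : ℂ) ≠ 0 := Int.cast_ne_zero.mpr (by omega)
        intro hcontra
        apply this
        push_cast at hcontra ⊢
        linear_combination hcontra
      rcases mul_eq_zero.mp hz with hz' | hz'
      · exact absurd hz' hne
      · rw [hz', zero_mul]
  intro p hp
  -- A-pair : off-diagonal vanishing
  obtain ⟨DA, hDAder, hxA, hyA⟩ :=
    hΔ (L (p : ℤ) 0 + L (-(2 * p : ℤ)) (2 * p)) (L (-1) 1)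
  obtain ⟨aA, lA, hDA⟩ := hDer DA hDAder
  obtain ⟨hlA, hA⟩ := constrA hDA (by rw [← hyA, h2])
  have hoff : ∀ k : ℤ × ℕ, k.1 + (k.2 : ℤ) ≠ (p : ℤ) →
      Δ (L (p : ℤ) 0 + L (-(2 * p : ℤ)) (2 * p)) k = 0 := by
    intro k hk
    rw [hxA, hDA, Dx_eval]
    have t1 : aA (k.1 - p, k.2) = 0 := by
      have hz := hA (k.1 - p) k.2
      have hne : ((k.1 - p : ℤ) : ℂ) + (k.2 : ℂ) ≠ 0 := by
        have : ((k.1 - p + k.2 : ℤ) : ℂ) ≠ 0 := Int.cast_ne_zero.mpr (by omega)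
        intro hcontra
        apply this
        push_cast at hcontra ⊢
        linear_combination hcontra
      rcases mul_eq_zero.mp hz with hz' | hz'
      · exact absurd hz' hne
      · exact hz'
    have t2 : ∀ (m : ℤ) (i : ℕ), aA (m, i) * coef (m, i) (-(2 * p : ℤ), 2 * p) = 0 := by
      intro m i
      have hc : coef (m, i) (-(2 * p : ℤ), 2 * p)
          = (2 * (p : ℂ) + 1) * ((m : ℂ) + (i : ℂ)) := by
        simp only [coef]
        push_cast
        ring
      rw [hc]
      have := hA m i
      linear_combination (2 * (p : ℂ) + 1) * this
    rw [t1, zero_mul, hlA, zero_mul, zero_add, add_zero]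
    split_ifs with h2p
    · exact t2 _ _
    · rfl
  rcases eq_or_lt_of_le hp with hp1 | hp2
  · -- p = 1 : use the pair (x, L 2 0)
    subst hp1
    obtain ⟨DC, hDCder, hxC, hyC⟩ :=
      hΔ (L ((1 : ℕ) : ℤ) 0 + L (-(2 * (1 : ℕ) : ℤ)) (2 * 1)) (L 2 0)
    obtain ⟨aC, lC, hDC⟩ := hDer DC hDCder
    obtain ⟨hlC, hC⟩ := constrC hDC (by rw [← hyC, hL20])
    refine Finsupp.ext fun k => ?_
    simp only [Finsupp.coe_zero, Pi.zero_apply]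
    by_cases hk : k.1 + (k.2 : ℤ) = ((1 : ℕ) : ℤ)
    · rw [hxC, hDC, Dx_eval]
      have hne2 : k ≠ (-(2 * ((1 : ℕ) : ℤ)), 2 * 1) := by
        intro hcontra
        rw [hcontra] at hk
        norm_num at hk
      have t2 : (if 2 * 1 ≤ k.2 then
          aC (k.1 - -(2 * ((1 : ℕ) : ℤ)), k.2 - 2 * 1) *
            coef (k.1 - -(2 * ((1 : ℕ) : ℤ)), k.2 - 2 * 1) (-(2 * ((1 : ℕ) : ℤ)), 2 * 1)
          else 0) = 0 := by
        split_ifs with h2k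
        · have hcond : ¬(k.1 - -(2 * ((1 : ℕ) : ℤ)) = 0 ∧ k.2 - 2 * 1 = 0) := by
            intro ⟨hA', hB'⟩
            exact hne2 (by ext <;> simp <;> omega)
          have hz := hC (k.1 - -(2 * ((1 : ℕ) : ℤ))) (k.2 - 2 * 1) hcond
          have hne : ((k.1 - -(2 * ((1 : ℕ) : ℤ)) : ℤ) : ℂ) - ((k.2 - 2 * 1 : ℕ) : ℂ) - 2 ≠ 0 := by
            have hZ : ((k.1 + 2 - (k.2 - 2 * 1 : ℕ) - 2 : ℤ) : ℂ) ≠ 0 := by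
              refine Int.cast_ne_zero.mpr ?_
              have : ((k.2 - 2 * 1 : ℕ) : ℤ) = (k.2 : ℤ) - 2 := by omega
              omega
            intro hcontra
            apply hZ
            push_cast
            push_cast at hcontra
            linear_combination hcontra
          rcases mul_eq_zero.mp hz with hz' | hz'
          · exact absurd hz' hne
          · rw [hz', zero_mul]
        · rfl
      rw [t2, add_zero, if_neg hne2, add_zero]
      by_cases hk10 : k = (((1 : ℕ) : ℤ), (0 : ℕ))
      · rw [hk10]
        simp only
        rw [hlC]
        simp only [if_true, sub_self]
        have hc : coef ((0 : ℤ), (0 : ℕ)) (((1 : ℕ) : ℤ), 0) = -(((1 : ℕ) : ℤ) : ℂ) := by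
          simp only [coef]
          push_cast
          ring
        rw [hc]
        push_cast
        ring
      · rw [if_neg hk10, mul_zero, add_zero]
        have hcond : ¬(k.1 - ((1 : ℕ) : ℤ) = 0 ∧ k.2 = 0) := by
          intro ⟨hA', hB'⟩
          exact hk10 (by ext <;> simp <;> omega)
        have hz := hC (k.1 - ((1 : ℕ) : ℤ)) k.2 hcond
        have hne : ((k.1 - ((1 : ℕ) : ℤ) : ℤ) : ℂ) - (k.2 : ℂ) - 2 ≠ 0 := by
          have hZ : ((k.1 - 1 - k.2 - 2 : ℤ) : ℂ) ≠ 0 := Int.cast_ne_zero.mpr (by omega)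
          intro hcontra
          apply hZ
          push_cast
          push_cast at hcontra
          linear_combination hcontra
        rcases mul_eq_zero.mp hz with hz' | hz'
        · exact absurd hz' hne
        · rw [hz', zero_mul]
    · exact hoff k hk
  · -- p ≥ 2 : use the pair (x, L 1 0)
    obtain ⟨DB, hDBder, hxB, hyB⟩ :=
      hΔ (L (p : ℤ) 0 + L (-(2 * p : ℤ)) (2 * p)) (L 1 0)
    obtain ⟨aB, lB, hDB⟩ := hDer DB hDBder
    obtain ⟨hlB, hB⟩ := constrB hDB (by rw [← hyB, h1])
    -- first : aB (1, i) = 0 for all i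
    have haB1 : ∀ i : ℕ, aB (1, i) = 0 := by
      intro i
      have hoffk := hoff ((p : ℤ) + 1, i) (by push_cast; omega)
      rw [hxB, hDB, Dx_eval] at hoffk
      simp only at hoffk
      have e1 : ((p : ℤ) + 1 - (p : ℤ)) = 1 := by ring
      rw [e1] at hoffk
      have t2 : (if 2 * p ≤ i then
          aB ((p : ℤ) + 1 - -(2 * p : ℤ), i - 2 * p) *
            coef ((p : ℤ) + 1 - -(2 * p : ℤ), i - 2 * p) (-(2 * p : ℤ), 2 * p)
          else 0) = 0 := by
        split_ifs with h2k
        · have hcond : ¬((p : ℤ) + 1 - -(2 * p : ℤ) = 0 ∧ i - 2 * p = 0) := by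
            intro ⟨hA', _⟩
            omega
          have hz := hB ((p : ℤ) + 1 - -(2 * p : ℤ)) (i - 2 * p) hcond
          have hne : (((p : ℤ) + 1 - -(2 * p : ℤ) : ℤ) : ℂ) - 1 ≠ 0 := by
            have hZ : ((3 * p : ℤ) : ℂ) ≠ 0 := Int.cast_ne_zero.mpr (by omega)
            intro hcontra
            apply hZ
            push_cast
            push_cast at hcontra
            linear_combination hcontra
          rcases mul_eq_zero.mp hz with hz' | hz'
          · exact absurd hz' hne
          · rw [hz', zero_mul]
        · rfl
      rw [t2, add_zero] at hoffk
      have d1 : (((p : ℤ) + 1, i) : ℤ × ℕ) ≠ ((p : ℤ), 0) := by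
        intro hcontra
        rw [Prod.mk.injEq] at hcontra
        omega
      have d2 : (((p : ℤ) + 1, i) : ℤ × ℕ) ≠ (-(2 * p : ℤ), 2 * p) := by
        intro hcontra
        rw [Prod.mk.injEq] at hcontra
        omega
      rw [if_neg d1, if_neg d2, add_zero, mul_zero, add_zero] at hoffk
      have hc : coef ((1 : ℤ), i) ((p : ℤ), 0) = -(((p : ℂ) - 1) * ((i : ℂ) + 1)) := by
        simp only [coef]
        push_cast
        ring
      rw [hc] at hoffk
      have hne : -(((p : ℂ) - 1) * ((i : ℂ) + 1)) ≠ 0 := by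
        have hp' : ((p : ℂ) - 1) ≠ 0 := by
          have : ((p - 1 : ℤ) : ℂ) ≠ 0 := Int.cast_ne_zero.mpr (by omega)
          intro hcontra
          apply this
          push_cast at hcontra ⊢
          linear_combination hcontra
        have hi' : ((i : ℂ) + 1) ≠ 0 := by
          have : (((i : ℤ) + 1 : ℤ) : ℂ) ≠ 0 := Int.cast_ne_zero.mpr (by omega)
          intro hcontra
          apply this
          push_cast at hcontra ⊢
          linear_combination hcontra
        simp [hp', hi']
      rcases mul_eq_zero.mp hoffk with hz' | hz'
      · exact hz'
      · exact absurd hz' hne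
    have haB : ∀ (m : ℤ) (i : ℕ), ¬(m = 0 ∧ i = 0) → aB (m, i) = 0 := by
      intro m i hmi
      by_cases hm : m = 1
      · subst hm; exact haB1 i
      · have hz := hB m i hmi
        have hne : ((m : ℂ) - 1) ≠ 0 := by
          have : ((m - 1 : ℤ) : ℂ) ≠ 0 := Int.cast_ne_zero.mpr (by omega)
          intro hcontra
          apply this
          push_cast at hcontra ⊢
          linear_combination hcontra
        rcases mul_eq_zero.mp hz with hz' | hz'
        · exact absurd hz' hne
        · exact hz'
    refine Finsupp.ext fun k => ?_
    simp only [Finsupp.coe_zero, Pi.zero_apply]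
    by_cases hk : k.1 + (k.2 : ℤ) = (p : ℤ)
    · rw [hxB, hDB, Dx_eval]
      have hne2 : k ≠ (-(2 * p : ℤ), 2 * p) := by
        intro hcontra
        rw [hcontra] at hk
        simp at hk
        omega
      have t2 : (if 2 * p ≤ k.2 then
          aB (k.1 - -(2 * p : ℤ), k.2 - 2 * p) *
            coef (k.1 - -(2 * p : ℤ), k.2 - 2 * p) (-(2 * p : ℤ), 2 * p)
          else 0) = 0 := by
        split_ifs with h2k
        · have hcond : ¬(k.1 - -(2 * p : ℤ) = 0 ∧ k.2 - 2 * p = 0) := by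
            intro ⟨hA', hB'⟩
            exact hne2 (by ext <;> simp <;> omega)
          rw [haB _ _ hcond, zero_mul]
        · rfl
      rw [t2, add_zero, if_neg hne2, add_zero]
      by_cases hkp : k = ((p : ℤ), (0 : ℕ))
      · rw [hkp]
        simp only
        rw [hlB]
        simp only [if_true, sub_self]
        have hc : coef ((0 : ℤ), (0 : ℕ)) ((p : ℤ), 0) = -(((p : ℕ) : ℤ) : ℂ) := by
          simp only [coef]
          push_cast
          ring
        rw [hc]
        push_cast
        ring
      · rw [if_neg hkp, mul_zero, add_zero]
        have hcond : ¬(k.1 - (p : ℤ) = 0 ∧ k.2 = 0) := by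
          intro ⟨hA', hB'⟩
          exact hkp (by ext <;> simp <;> omega)
        rw [haB _ _ hcond, zero_mul]
    · exact hoff k hk

end
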